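/- Let K ≥ 1 and 0 ≤ α ≤ 1. Let (T₁, Z₁), …, (T_K, Z_K) be i.i.d. random pairs where each Tᵢ is uniformly distributed on [0,1], each Zᵢ takes values in [0,1], and Tᵢ is independent of Zᵢ. Assume p_α = ℙ(Z₁ > α) > 0. Define the random variable Z* as follows: if the set E = {i : Zᵢ > α} is nonempty, let I be the index in E minimizing T_I (almost surely unique) and set Z* = Z_I; otherwise set Z* = max(Z₁, …, Z_K). Then for every z ∈ (α, 1], ℙ(Z* > z) = (1 − (1 − p_α)^K) · p_z / p_α, where p_z = ℙ(Z₁ > z). -/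

import Mathlib

open MeasureTheory ProbabilityTheory

open scoped ENNReal

set_option linter.unusedSectionVars false
set_option maxHeartbeats 1000000


section Aux

variable {Ω : Type*} [MeasureSpace Ω] [IsProbabilityMeasure (ℙ : Measure Ω)] {K : ℕ}

/-- From i.i.d.-style independence of the pairs `(Tᵢ, Zᵢ)` together with within-pair
independence, the whole family of `2K` random variables is independent. -/
lemma sf_aux_iIndep_sum_elim (T Z : Fin K → Ω → ℝ)
    (hpairsIndep : iIndepFun (fun i ω => (T i ω, Z i ω)) ℙ)
    (hTZindep : ∀ i, IndepFun (T i) (Z i) ℙ) :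
    iIndepFun (Sum.elim T Z) ℙ := by
  rw [iIndepFun_iff]
  intro s f' hf'
  classical
  have hA : ∀ i : Fin K, ∃ a : Set ℝ, MeasurableSet a ∧
      T i ⁻¹' a = (if Sum.inl i ∈ s then f' (Sum.inl i) else Set.univ) := by
    intro i
    by_cases h : Sum.inl i ∈ s
    · rw [if_pos h]
      exact MeasurableSpace.measurableSet_comap.mp (hf' _ h)
    · exact ⟨Set.univ, MeasurableSet.univ, by simp [h]⟩
  have hB : ∀ i : Fin K, ∃ b : Set ℝ, MeasurableSet b ∧
      Z i ⁻¹' b = (if Sum.inr i ∈ s then f' (Sum.inr i) else Set.univ) := by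
    intro i
    by_cases h : Sum.inr i ∈ s
    · rw [if_pos h]
      exact MeasurableSpace.measurableSet_comap.mp (hf' _ h)
    · exact ⟨Set.univ, MeasurableSet.univ, by simp [h]⟩
  choose a ha haeq using hA
  choose b hb hbeq using hB
  have h1 : ⋂ x ∈ s, f' x = ⋂ i : Fin K, (T i ⁻¹' a i ∩ Z i ⁻¹' b i) := by
    ext ω
    simp only [Set.mem_iInter, Set.mem_inter_iff, ← Set.mem_preimage, haeq, hbeq]
    constructor
    · intro h i
      constructor
      · split_ifs with h'
        · exact h _ h'
        · trivial
      · split_ifs with h'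
        · exact h _ h'
        · trivial
    · intro h x hx
      rcases x with i | i
      · have := (h i).1; rwa [if_pos hx] at this
      · have := (h i).2; rwa [if_pos hx] at this
  have h2 : ℙ (⋂ i : Fin K, (T i ⁻¹' a i ∩ Z i ⁻¹' b i))
      = ∏ i : Fin K, ℙ (T i ⁻¹' a i ∩ Z i ⁻¹' b i) := by
    refine hpairsIndep.meas_iInter fun i => ?_
    exact ⟨Prod.fst ⁻¹' a i ∩ Prod.snd ⁻¹' b i,
      ((ha i).preimage measurable_fst).inter ((hb i).preimage measurable_snd), rfl⟩
  have h3 : ∀ i : Fin K, ℙ (T i ⁻¹' a i ∩ Z i ⁻¹' b i) = ℙ (T i ⁻¹' a i) * ℙ (Z i ⁻¹' b i) :=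
    fun i => (hTZindep i).measure_inter_preimage_eq_mul _ _ (ha i) (hb i)
  have h4 : ∀ x : Fin K ⊕ Fin K, x ∈ s →
      ℙ (f' x) = (Sum.elim (fun i => ℙ (T i ⁻¹' a i)) (fun i => ℙ (Z i ⁻¹' b i)) x) := by
    rintro (i | i) hx
    · simp only [Sum.elim_inl]; rw [haeq i, if_pos hx]
    · simp only [Sum.elim_inr]; rw [hbeq i, if_pos hx]
  have h5 : ∀ x : Fin K ⊕ Fin K, x ∉ s →
      (Sum.elim (fun i => ℙ (T i ⁻¹' a i)) (fun i => ℙ (Z i ⁻¹' b i)) x) = 1 := by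
    rintro (i | i) hx
    · simp only [Sum.elim_inl]; rw [haeq i, if_neg hx]; simp
    · simp only [Sum.elim_inr]; rw [hbeq i, if_neg hx]; simp
  calc ℙ (⋂ x ∈ s, f' x)
      = ∏ i : Fin K, (ℙ (T i ⁻¹' a i) * ℙ (Z i ⁻¹' b i)) := by
        rw [h1, h2]; exact Finset.prod_congr rfl fun i _ => h3 i
    _ = (∏ i : Fin K, ℙ (T i ⁻¹' a i)) * ∏ i : Fin K, ℙ (Z i ⁻¹' b i) :=
        Finset.prod_mul_distrib
    _ = ∏ x : Fin K ⊕ Fin K,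
          Sum.elim (fun i => ℙ (T i ⁻¹' a i)) (fun i => ℙ (Z i ⁻¹' b i)) x := by
        rw [Fintype.prod_sum_type]; simp
    _ = ∏ x ∈ s, Sum.elim (fun i => ℙ (T i ⁻¹' a i)) (fun i => ℙ (Z i ⁻¹' b i)) x :=
        (Finset.prod_subset (Finset.subset_univ s) fun x _ hx => h5 x hx).symm
    _ = ∏ x ∈ s, ℙ (f' x) := Finset.prod_congr rfl fun x hx => (h4 x hx).symm

end Aux

section Aux2

variable {Ω : Type*} [MeasureSpace Ω] [IsProbabilityMeasure (ℙ : Measure Ω)] {K : ℕ}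

/-- Two independent uniform random variables are a.s. distinct. -/
lemma sf_aux_tie_null (T : Fin K → Ω → ℝ) (hTmeas : ∀ i, Measurable (T i))
    (hTunif : ∀ i, Measure.map (T i) ℙ = volume.restrict (Set.Icc (0 : ℝ) 1))
    (hTind : iIndepFun T ℙ)
    {i j : Fin K} (hij : i ≠ j) : ℙ {ω | T i ω = T j ω} = 0 := by
  have hind : IndepFun (T i) (T j) ℙ := hTind.indepFun hij
  have hmap : Measure.map (fun ω => (T i ω, T j ω)) ℙ
      = (Measure.map (T i) ℙ).prod (Measure.map (T j) ℙ) :=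
    (indepFun_iff_map_prod_eq_prod_map_map (hTmeas i).aemeasurable
      (hTmeas j).aemeasurable).mp hind
  have hD : MeasurableSet {p : ℝ × ℝ | p.1 = p.2} :=
    measurableSet_eq_fun measurable_fst measurable_snd
  have hset : {ω | T i ω = T j ω} = (fun ω => (T i ω, T j ω)) ⁻¹' {p : ℝ × ℝ | p.1 = p.2} := rfl
  rw [hset, ← Measure.map_apply ((hTmeas i).prodMk (hTmeas j)) hD, hmap, hTunif i, hTunif j,
    Measure.prod_apply hD]
  have hz : ∀ x : ℝ,
      (volume.restrict (Set.Icc (0 : ℝ) 1)) (Prod.mk x ⁻¹' {p : ℝ × ℝ | p.1 = p.2}) = 0 := by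
    intro x
    have : Prod.mk x ⁻¹' {p : ℝ × ℝ | p.1 = p.2} = {x} := by
      ext y; simp [eq_comm]
    rw [this, Measure.restrict_apply (measurableSet_singleton x)]
    exact measure_mono_null Set.inter_subset_left (Real.volume_singleton)
  simp only [hz, lintegral_zero]

variable (T Z : Fin K → Ω → ℝ) (α z : ℝ)

/-- The event that `T i` is strictly minimal among the wake-up times indexed by `S`. -/
def sfF (p : Finset (Fin K) × Fin K) : Set Ω :=
  ⋂ j ∈ p.1.erase p.2, {ω | T p.2 ω < T j ω}

/-- Target interval for the `j`-th progress variable. -/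
def sfI (p : Finset (Fin K) × Fin K) (j : Fin K) : Set ℝ :=
  if j = p.2 then Set.Ioi z else if j ∈ p.1 then Set.Ioi α else Set.Iic α

/-- The event on the progress variables: the exceedance set is exactly `p.1` and the
selected node `p.2` has progress above `z`. -/
def sfH (p : Finset (Fin K) × Fin K) : Set Ω :=
  ⋂ j : Fin K, Z j ⁻¹' (sfI α z p j)

lemma sfI_measurableSet (p : Finset (Fin K) × Fin K) (j : Fin K) :
    MeasurableSet (sfI α z p j) := by
  unfold sfI
  split_ifs
  · exact measurableSet_Ioi
  · exact measurableSet_Ioi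
  · exact measurableSet_Iic

lemma sfF_measurableSet (hTmeas : ∀ i, Measurable (T i)) (p : Finset (Fin K) × Fin K) :
    MeasurableSet (sfF T p) :=
  Finset.measurableSet_biInter _ fun j _ => measurableSet_lt (hTmeas p.2) (hTmeas j)

lemma sfH_measurableSet (hZmeas : ∀ i, Measurable (Z i)) (p : Finset (Fin K) × Fin K) :
    MeasurableSet (sfH Z α z p) :=
  MeasurableSet.iInter fun j => (hZmeas j) (sfI_measurableSet α z p j)

/-- Factorization of the probability of `sfF ∩ sfH` using independence of all `2K` variables. -/
lemma sf_aux_factor (hTmeas : ∀ i, Measurable (T i)) (hZmeas : ∀ i, Measurable (Z i))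
    (hindep : iIndepFun (Sum.elim T Z) ℙ)
    (p : Finset (Fin K) × Fin K) :
    ℙ (sfF T p ∩ sfH Z α z p) = ℙ (sfF T p) * ℙ (sfH Z α z p) := by
  classical
  set S₁ : Finset (Fin K ⊕ Fin K) := Finset.univ.image Sum.inl with hS₁
  set S₂ : Finset (Fin K ⊕ Fin K) := Finset.univ.image Sum.inr with hS₂
  have hdisj : Disjoint S₁ S₂ := by
    rw [Finset.disjoint_left]
    rintro x hx1 hx2
    rw [hS₁, Finset.mem_image] at hx1
    rw [hS₂, Finset.mem_image] at hx2
    obtain ⟨i, -, rfl⟩ := hx1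
    obtain ⟨j, -, h⟩ := hx2
    exact Sum.inr_ne_inl h
  have hmeas : ∀ x : Fin K ⊕ Fin K, Measurable (Sum.elim T Z x) := by
    rintro (i | i)
    · exact hTmeas i
    · exact hZmeas i
  have hIF := hindep.indepFun_finset S₁ S₂ hdisj hmeas
  have hmem1 : ∀ i : Fin K, Sum.inl i ∈ S₁ := fun i =>
    Finset.mem_image_of_mem _ (Finset.mem_univ i)
  have hmem2 : ∀ i : Fin K, Sum.inr i ∈ S₂ := fun i =>
    Finset.mem_image_of_mem _ (Finset.mem_univ i)
  have hF' : sfF T p = (fun a (x : S₁) => Sum.elim T Z (x : Fin K ⊕ Fin K) a) ⁻¹'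
      (⋂ j ∈ p.1.erase p.2,
        {v : S₁ → ℝ | v ⟨Sum.inl p.2, hmem1 p.2⟩ < v ⟨Sum.inl j, hmem1 j⟩}) := by
    ext ω
    simp only [sfF, Set.mem_iInter, Set.mem_preimage, Set.mem_setOf_eq]
    rfl
  have hH' : sfH Z α z p = (fun a (x : S₂) => Sum.elim T Z (x : Fin K ⊕ Fin K) a) ⁻¹'
      (⋂ j : Fin K, {v : S₂ → ℝ | v ⟨Sum.inr j, hmem2 j⟩ ∈ sfI α z p j}) := by
    ext ω
    simp only [sfH, Set.mem_iInter, Set.mem_preimage, Set.mem_setOf_eq]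
    rfl
  rw [hF', hH']
  refine hIF.measure_inter_preimage_eq_mul _ _ ?_ ?_
  · exact Finset.measurableSet_biInter _ fun j _ =>
      measurableSet_lt (measurable_pi_apply _) (measurable_pi_apply _)
  · exact MeasurableSet.iInter fun j =>
      (measurable_pi_apply _) (sfI_measurableSet α z p j)

/-- The probability that some node of `S` has the strictly minimal wake-up time is one,
so summing over the possible minima gives one. -/
lemma sf_aux_F_sum (hTmeas : ∀ i, Measurable (T i))
    (htie : ∀ i j : Fin K, i ≠ j → ℙ {ω | T i ω = T j ω} = 0)
    {S : Finset (Fin K)} (hS : S.Nonempty) :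
    ∑ i ∈ S, ℙ (sfF T (S, i)) = 1 := by
  classical
  have hFmeas : ∀ i : Fin K, MeasurableSet (sfF T (S, i)) := fun i =>
    sfF_measurableSet T hTmeas (S, i)
  have hdisj : (↑S : Set (Fin K)).PairwiseDisjoint (fun i => sfF T (S, i)) := by
    intro i hi j hj hij
    refine Set.disjoint_left.mpr fun ω hωi hωj => ?_
    simp only [sfF, Set.mem_iInter, Set.mem_setOf_eq] at hωi hωj
    have h1 : T i ω < T j ω := hωi j (Finset.mem_erase.mpr ⟨hij.symm, hj⟩)
    have h2 : T j ω < T i ω := hωj i (Finset.mem_erase.mpr ⟨hij, hi⟩)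
    exact absurd h1 (not_lt.mpr h2.le)
  rw [← measure_biUnion_finset hdisj fun i _ => hFmeas i]
  refine le_antisymm prob_le_one ?_
  set N : Set Ω := ⋃ i, ⋃ j, ⋃ _h : i ≠ j, {ω | T i ω = T j ω} with hN_def
  have hN : ℙ N = 0 :=
    measure_iUnion_null fun i => measure_iUnion_null fun j =>
      measure_iUnion_null fun h => htie i j h
  have hcover : (Set.univ : Set Ω) ⊆ (⋃ i ∈ S, sfF T (S, i)) ∪ N := by
    intro ω _
    obtain ⟨i, hi, hmin⟩ := S.exists_min_image (fun k => T k ω) hS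
    by_cases hstrict : ∀ j ∈ S.erase i, T i ω < T j ω
    · left
      refine Set.mem_biUnion hi ?_
      simp only [sfF, Set.mem_iInter, Set.mem_setOf_eq]
      exact fun j hj => hstrict j hj
    · right
      push_neg at hstrict
      obtain ⟨j, hj, hle⟩ := hstrict
      have hjS := Finset.mem_of_mem_erase hj
      have hne : i ≠ j := (Finset.ne_of_mem_erase hj).symm
      have heq : T i ω = T j ω := le_antisymm (hmin j hjS) hle
      exact Set.mem_iUnion.mpr ⟨i, Set.mem_iUnion.mpr ⟨j, Set.mem_iUnion.mpr ⟨hne, heq⟩⟩⟩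
  calc (1 : ℝ≥0∞) = ℙ (Set.univ : Set Ω) := measure_univ.symm
    _ ≤ ℙ ((⋃ i ∈ S, sfF T (S, i)) ∪ N) := measure_mono hcover
    _ ≤ ℙ (⋃ i ∈ S, sfF T (S, i)) + ℙ N := measure_union_le _ _
    _ = ℙ (⋃ i ∈ S, sfF T (S, i)) := by rw [hN, add_zero]

end Aux2

/-- Counting the factors in the product over all nodes of the single-node probabilities. -/
lemma sf_aux_prod_count {K : ℕ} (pz pa qa : ℝ≥0∞) {S : Finset (Fin K)} {i : Fin K}
    (hi : i ∈ S) :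
    (∏ j : Fin K, if j = i then pz else if j ∈ S then pa else qa)
      = pz * pa ^ (S.card - 1) * qa ^ (K - S.card) := by
  classical
  rw [← Finset.mul_prod_erase Finset.univ _ (Finset.mem_univ i)]
  rw [if_pos rfl]
  have hrw : ∀ j ∈ Finset.univ.erase i,
      (if j = i then pz else if j ∈ S then pa else qa) = (if j ∈ S then pa else qa) :=
    fun j hj => if_neg (Finset.ne_of_mem_erase hj)
  rw [Finset.prod_congr rfl hrw, Finset.prod_ite (fun _ => pa) (fun _ => qa),
    Finset.prod_const, Finset.prod_const]
  have h1 : (Finset.univ.erase i).filter (fun j => j ∈ S) = S.erase i := by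
    ext j
    simp only [Finset.mem_filter, Finset.mem_erase, Finset.mem_univ, true_and, and_true,
      and_comm]
  have h2 : (Finset.univ.erase i).filter (fun j => ¬ j ∈ S) = Sᶜ := by
    ext j
    simp only [Finset.mem_filter, Finset.mem_erase, Finset.mem_univ, true_and, and_true,
      Finset.mem_compl]
    constructor
    · exact fun h => h.2
    · exact fun h => ⟨fun hji => h (hji ▸ hi), h⟩
  rw [h1, h2, Finset.card_erase_of_mem hi, Finset.card_compl, Fintype.card_fin, mul_assoc]

/-- Binomial expansion identity: the total mass of the subset decomposition is 1. -/
lemma sf_aux_binom {p q : ℝ} (hpq : p + q = 1) (K : ℕ) :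
    ∑ S : Finset (Fin K), p ^ S.card * q ^ (K - S.card) = 1 := by
  classical
  have h := Finset.prod_add (fun _ : Fin K => p) (fun _ : Fin K => q) Finset.univ
  simp only [Finset.prod_const, hpq, one_pow, Finset.powerset_univ] at h
  refine Eq.trans ?_ h.symm
  refine Finset.sum_congr rfl fun t _ => ?_
  rw [Finset.card_univ_diff, Fintype.card_fin]

/-- The final real-valued algebraic computation. -/
lemma sf_aux_final_algebra {K : ℕ} {rpa rpz rqa : ℝ} (hpa : 0 < rpa) (hq : rpa + rqa = 1)
    (F : Finset (Fin K) → Fin K → ℝ)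
    (hF : ∀ S : Finset (Fin K), S.Nonempty → ∑ i ∈ S, F S i = 1) :
    ∑ S : Finset (Fin K), ∑ i ∈ S, F S i * (rpz * rpa ^ (S.card - 1) * rqa ^ (K - S.card))
      = (1 - rqa ^ K) * rpz / rpa := by
  classical
  have h1 : ∀ S : Finset (Fin K),
      ∑ i ∈ S, F S i * (rpz * rpa ^ (S.card - 1) * rqa ^ (K - S.card))
        = (if S = ∅ then 0 else rpz * rpa ^ (S.card - 1) * rqa ^ (K - S.card)) := by
    intro S
    rw [← Finset.sum_mul]
    rcases eq_or_ne S ∅ with rfl | hS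
    · simp
    · rw [hF S (Finset.nonempty_iff_ne_empty.mpr hS), one_mul, if_neg hS]
  rw [Finset.sum_congr rfl fun S _ => h1 S, eq_div_iff hpa.ne', Finset.sum_mul]
  have h2 : ∀ S : Finset (Fin K),
      (if S = ∅ then (0:ℝ) else rpz * rpa ^ (S.card - 1) * rqa ^ (K - S.card)) * rpa
        = rpz * (rpa ^ S.card * rqa ^ (K - S.card))
          - (if S = ∅ then rpz * (rpa ^ S.card * rqa ^ (K - S.card)) else 0) := by
    intro S
    rcases eq_or_ne S ∅ with rfl | hS
    · simp
    · rw [if_neg hS, if_neg hS, sub_zero]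
      have hc : S.card - 1 + 1 = S.card :=
        Nat.succ_pred_eq_of_pos (Finset.card_pos.mpr (Finset.nonempty_iff_ne_empty.mpr hS))
      calc rpz * rpa ^ (S.card - 1) * rqa ^ (K - S.card) * rpa
          = rpz * (rpa ^ (S.card - 1) * rpa * rqa ^ (K - S.card)) := by ring
        _ = rpz * (rpa ^ S.card * rqa ^ (K - S.card)) := by rw [← pow_succ, hc]
  rw [Finset.sum_congr rfl fun S _ => h2 S, Finset.sum_sub_distrib, ← Finset.mul_sum,
    sf_aux_binom hq K, Finset.sum_ite_eq' Finset.univ (∅ : Finset (Fin K))]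
  simp only [Finset.mem_univ, if_pos, Finset.card_empty, pow_zero, one_mul, Nat.sub_zero]
  ring

section AuxChar

variable {Ω : Type*} [MeasureSpace Ω] {K : ℕ} (T Z : Fin K → Ω → ℝ) {α z : ℝ}

/-- Pointwise characterization of the event `sfF ∩ sfH`. -/
lemma sf_aux_A_char (hαz : α < z) {p : Finset (Fin K) × Fin K} (hp : p.2 ∈ p.1) (ω : Ω) :
    ω ∈ sfF T p ∩ sfH Z α z p ↔
      (Finset.univ.filter fun k => α < Z k ω) = p.1
        ∧ (∀ j ∈ p.1.erase p.2, T p.2 ω < T j ω) ∧ z < Z p.2 ω := by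
  simp only [Set.mem_inter_iff, sfF, sfH, sfI, Set.mem_iInter, Set.mem_preimage,
    Set.mem_setOf_eq]
  constructor
  · rintro ⟨hF, hH⟩
    have hzi : z < Z p.2 ω := by have := hH p.2; rwa [if_pos rfl, Set.mem_Ioi] at this
    refine ⟨Finset.ext fun k => ?_, hF, hzi⟩
    simp only [Finset.mem_filter, Finset.mem_univ, true_and]
    by_cases hk : k = p.2
    · subst hk; exact ⟨fun _ => hp, fun _ => lt_trans hαz hzi⟩
    · have hHk := hH k
      rw [if_neg hk] at hHk
      by_cases hkS : k ∈ p.1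
      · rw [if_pos hkS, Set.mem_Ioi] at hHk; exact ⟨fun _ => hkS, fun _ => hHk⟩
      · rw [if_neg hkS, Set.mem_Iic] at hHk
        exact ⟨fun h => absurd h (not_lt.mpr hHk), fun h => absurd h hkS⟩
  · rintro ⟨hfilt, hF, hzi⟩
    refine ⟨hF, fun j => ?_⟩
    by_cases hj : j = p.2
    · subst hj; rw [if_pos rfl]; exact Set.mem_Ioi.mpr hzi
    · rw [if_neg hj]
      have hmem : j ∈ p.1 ↔ α < Z j ω := by
        conv_lhs => rw [← hfilt]
        simp [Finset.mem_filter]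
      by_cases hjS : j ∈ p.1
      · rw [if_pos hjS]; exact Set.mem_Ioi.mpr (hmem.mp hjS)
      · rw [if_neg hjS]; exact Set.mem_Iic.mpr (not_lt.mp fun h => hjS (hmem.mpr h))

end AuxChar


/-- Equation (27) of the paper: tail probability of the one-hop progress of the
SF policy above the threshold. The `K` pairs `(Tᵢ, Zᵢ)` are i.i.d., with `Tᵢ`
uniform on `[0,1]`, `Zᵢ ∈ [0,1]`, and `Tᵢ` independent of `Zᵢ`; assume
`p_α = ℙ(Z₁ > α) > 0`. The progress `Z*` equals the progress of the
first-to-wake node whose progress exceeds the threshold `α`, if any, and the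
maximal progress otherwise. Then for `z ∈ (α,1]`,
`ℙ(Z* > z) = (1 − (1 − p_α)^K) · p_z / p_α` where `p_z = ℙ(Z₁ > z)`. -/
theorem sf_progress_tail_above_threshold
    {Ω : Type*} [MeasureSpace Ω] [IsProbabilityMeasure (ℙ : Measure Ω)]
    (K : ℕ) (hK : 1 ≤ K) (α : ℝ) (hα : α ∈ Set.Icc (0 : ℝ) 1)
    (T Z : Fin K → Ω → ℝ)
    (hTmeas : ∀ i, Measurable (T i)) (hZmeas : ∀ i, Measurable (Z i))
    (hpairsIndep : iIndepFun (fun i ω => (T i ω, Z i ω)) ℙ)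
    (hpairsIdent : ∀ i, Measure.map (fun ω => (T i ω, Z i ω)) ℙ
      = Measure.map (fun ω => (T ⟨0, hK⟩ ω, Z ⟨0, hK⟩ ω)) ℙ)
    (hTunif : ∀ i, Measure.map (T i) ℙ = volume.restrict (Set.Icc (0 : ℝ) 1))
    (hZ01 : ∀ i, ∀ᵐ ω ∂ℙ, Z i ω ∈ Set.Icc (0 : ℝ) 1)
    (hTZindep : ∀ i, IndepFun (T i) (Z i) ℙ)
    (hpα : 0 < (ℙ {ω | α < Z ⟨0, hK⟩ ω}).toReal)
    (Zstar : Ω → ℝ)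
    (hZstarNonempty : ∀ ω, ∀ h : (Finset.univ.filter fun i => α < Z i ω).Nonempty,
      ∃ i ∈ Finset.univ.filter fun i => α < Z i ω,
        (∀ j ∈ Finset.univ.filter fun i => α < Z i ω, T i ω ≤ T j ω) ∧
        Zstar ω = Z i ω)
    (hZstarEmpty : ∀ ω, ¬ (Finset.univ.filter fun i => α < Z i ω).Nonempty →
      Zstar ω = ⨆ i, Z i ω) :
    ∀ z : ℝ, α < z → z ≤ 1 →
      (ℙ {ω | z < Zstar ω}).toReal
        = (1 - (1 - (ℙ {ω | α < Z ⟨0, hK⟩ ω}).toReal) ^ K)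
          * (ℙ {ω | z < Z ⟨0, hK⟩ ω}).toReal
          / (ℙ {ω | α < Z ⟨0, hK⟩ ω}).toReal := by
  intro z hαz hz1
  haveI : Nonempty (Fin K) := ⟨⟨0, hK⟩⟩
  -- independence structure
  have hSum : iIndepFun (Sum.elim T Z) ℙ :=
    sf_aux_iIndep_sum_elim T Z hpairsIndep hTZindep
  have hTind : iIndepFun T ℙ :=
    hpairsIndep.comp (fun _ => Prod.fst) (fun _ => measurable_fst)
  have hZind : iIndepFun Z ℙ :=
    hpairsIndep.comp (fun _ => Prod.snd) (fun _ => measurable_snd)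
  have htie : ∀ i j : Fin K, i ≠ j → ℙ {ω | T i ω = T j ω} = 0 :=
    fun i j hij => sf_aux_tie_null T hTmeas hTunif hTind hij
  -- the Z's are identically distributed
  have hmapZ : ∀ j : Fin K, Measure.map (Z j) ℙ = Measure.map (Z ⟨0, hK⟩) ℙ := by
    intro j
    have h1 : ∀ k : Fin K, Measure.map (Z k) ℙ
        = Measure.map Prod.snd (Measure.map (fun ω => (T k ω, Z k ω)) ℙ) := fun k =>
      (Measure.map_map measurable_snd ((hTmeas k).prodMk (hZmeas k))).symm
    rw [h1 j, hpairsIdent j, ← h1 ⟨0, hK⟩]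
  have hZset : ∀ (j : Fin K) (I : Set ℝ), MeasurableSet I →
      ℙ (Z j ⁻¹' I) = ℙ (Z ⟨0, hK⟩ ⁻¹' I) := by
    intro j I hI
    rw [← Measure.map_apply (hZmeas j) hI, hmapZ j, Measure.map_apply (hZmeas _) hI]
  -- the decomposition
  set P : Finset (Finset (Fin K) × Fin K) :=
    Finset.univ.filter (fun p => p.2 ∈ p.1) with hP_def
  set M : Set Ω := ⋃ p ∈ P, (sfF T p ∩ sfH Z α z p) with hM_def
  set N : Set Ω := ⋃ i, ⋃ j, ⋃ _h : i ≠ j, {ω | T i ω = T j ω} with hN_def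
  have hNnull : ℙ N = 0 :=
    measure_iUnion_null fun i => measure_iUnion_null fun j =>
      measure_iUnion_null fun h => htie i j h
  have hMsub : M ⊆ {ω | z < Zstar ω} := by
    intro ω hω
    obtain ⟨p, hp, hωp⟩ := Set.mem_iUnion₂.mp hω
    have hp2 : p.2 ∈ p.1 := (Finset.mem_filter.mp hp).2
    obtain ⟨hfilt, hstrict, hzZ⟩ := (sf_aux_A_char T Z hαz hp2 ω).mp hωp
    have hfne : (Finset.univ.filter fun i => α < Z i ω).Nonempty := by
      rw [hfilt]; exact ⟨p.2, hp2⟩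
    obtain ⟨i', hi'mem, hi'min, hZeq⟩ := hZstarNonempty ω hfne
    show z < Zstar ω
    rw [hZeq]
    rw [hfilt] at hi'mem
    by_cases h : i' = p.2
    · rwa [h]
    · exfalso
      have h1 : T p.2 ω < T i' ω := hstrict i' (Finset.mem_erase.mpr ⟨h, hi'mem⟩)
      have h2 : T i' ω ≤ T p.2 ω := hi'min p.2 (by rw [hfilt]; exact hp2)
      exact absurd h1 (not_lt.mpr h2)
  have hsub2 : {ω | z < Zstar ω} ⊆ M ∪ N := by
    intro ω hω
    have hω' : z < Zstar ω := hω
    by_cases hfne : (Finset.univ.filter fun i => α < Z i ω).Nonempty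
    · obtain ⟨i, himem, himin, hZeq⟩ := hZstarNonempty ω hfne
      by_cases hstrict :
          ∀ j ∈ (Finset.univ.filter fun k => α < Z k ω).erase i, T i ω < T j ω
      · left
        have hmemP : ((Finset.univ.filter fun k => α < Z k ω), i) ∈ P :=
          Finset.mem_filter.mpr ⟨Finset.mem_univ _, himem⟩
        refine Set.mem_biUnion hmemP ?_
        refine (sf_aux_A_char T Z hαz (p := ((Finset.univ.filter fun k => α < Z k ω), i))
          himem ω).mpr ⟨rfl, hstrict, ?_⟩
        rw [← hZeq]; exact hω'
      · right
        push_neg at hstrict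
        obtain ⟨j, hj, hle⟩ := hstrict
        have heq : T i ω = T j ω :=
          le_antisymm (himin j (Finset.mem_of_mem_erase hj)) hle
        exact Set.mem_iUnion.mpr ⟨i, Set.mem_iUnion.mpr ⟨j,
          Set.mem_iUnion.mpr ⟨(Finset.ne_of_mem_erase hj).symm, heq⟩⟩⟩
    · exfalso
      have hsup := hZstarEmpty ω hfne
      obtain ⟨i₀, hi₀⟩ := Finite.exists_max fun i => Z i ω
      have hz2 : z < ⨆ i, Z i ω := by rw [← hsup]; exact hω'
      have hz3 : z < Z i₀ ω := lt_of_lt_of_le hz2 (ciSup_le hi₀)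
      exact hfne ⟨i₀, Finset.mem_filter.mpr ⟨Finset.mem_univ _, lt_trans hαz hz3⟩⟩
  have hdisjA : (↑P : Set (Finset (Fin K) × Fin K)).PairwiseDisjoint
      (fun p => sfF T p ∩ sfH Z α z p) := by
    intro p hp q hq hpq
    have hp2 : p.2 ∈ p.1 := (Finset.mem_filter.mp (Finset.mem_coe.mp hp)).2
    have hq2 : q.2 ∈ q.1 := (Finset.mem_filter.mp (Finset.mem_coe.mp hq)).2
    refine Set.disjoint_left.mpr fun ω hωp hωq => ?_
    obtain ⟨hf1, hs1, hz1'⟩ := (sf_aux_A_char T Z hαz hp2 ω).mp hωp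
    obtain ⟨hf2, hs2, hz2'⟩ := (sf_aux_A_char T Z hαz hq2 ω).mp hωq
    have h11 : p.1 = q.1 := hf1.symm.trans hf2
    have h22 : p.2 ≠ q.2 := fun h => hpq (Prod.ext h11 h)
    have ha : T p.2 ω < T q.2 ω :=
      hs1 q.2 (Finset.mem_erase.mpr ⟨Ne.symm h22, by rw [h11]; exact hq2⟩)
    have hb : T q.2 ω < T p.2 ω :=
      hs2 p.2 (Finset.mem_erase.mpr ⟨h22, by rw [← h11]; exact hp2⟩)
    exact absurd ha (not_lt.mpr hb.le)
  have hAmeas : ∀ p ∈ P, MeasurableSet (sfF T p ∩ sfH Z α z p) := fun p _ =>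
    (sfF_measurableSet T hTmeas p).inter (sfH_measurableSet Z α z hZmeas p)
  have hPM : ℙ M = ∑ p ∈ P, ℙ (sfF T p ∩ sfH Z α z p) :=
    measure_biUnion_finset hdisjA hAmeas
  have hPZ : ℙ {ω | z < Zstar ω} = ℙ M := by
    refine le_antisymm ?_ (measure_mono hMsub)
    calc ℙ {ω | z < Zstar ω} ≤ ℙ (M ∪ N) := measure_mono hsub2
      _ ≤ ℙ M + ℙ N := measure_union_le _ _
      _ = ℙ M := by rw [hNnull, add_zero]
  -- evaluating each term
  have hHval : ∀ p ∈ P, ℙ (sfH Z α z p)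
      = ℙ {ω | z < Z ⟨0, hK⟩ ω} * ℙ {ω | α < Z ⟨0, hK⟩ ω} ^ (p.1.card - 1)
        * ℙ {ω | Z ⟨0, hK⟩ ω ≤ α} ^ (K - p.1.card) := by
    intro p hp
    have hp2 : p.2 ∈ p.1 := (Finset.mem_filter.mp hp).2
    have h1 : ℙ (sfH Z α z p) = ∏ j : Fin K, ℙ (Z j ⁻¹' sfI α z p j) :=
      hZind.meas_iInter fun j => ⟨sfI α z p j, sfI_measurableSet α z p j, rfl⟩
    have h2 : ∀ j : Fin K, ℙ (Z j ⁻¹' sfI α z p j)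
        = (if j = p.2 then ℙ {ω | z < Z ⟨0, hK⟩ ω}
           else if j ∈ p.1 then ℙ {ω | α < Z ⟨0, hK⟩ ω}
           else ℙ {ω | Z ⟨0, hK⟩ ω ≤ α}) := by
      intro j
      rw [hZset j _ (sfI_measurableSet α z p j)]
      unfold sfI
      split_ifs <;> rfl
    rw [h1, Finset.prod_congr rfl fun j _ => h2 j]
    exact sf_aux_prod_count _ _ _ hp2
  rw [hPZ, hPM, ENNReal.toReal_sum (fun p _ => measure_ne_top _ _)]
  have hterm : ∀ p ∈ P, (ℙ (sfF T p ∩ sfH Z α z p)).toReal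
      = (ℙ (sfF T p)).toReal *
        ((ℙ {ω | z < Z ⟨0, hK⟩ ω}).toReal
          * (ℙ {ω | α < Z ⟨0, hK⟩ ω}).toReal ^ (p.1.card - 1)
          * (ℙ {ω | Z ⟨0, hK⟩ ω ≤ α}).toReal ^ (K - p.1.card)) := by
    intro p hp
    rw [sf_aux_factor T Z α z hTmeas hZmeas hSum p, hHval p hp, ENNReal.toReal_mul,
      ENNReal.toReal_mul, ENNReal.toReal_mul, ENNReal.toReal_pow, ENNReal.toReal_pow]
  rw [Finset.sum_congr rfl hterm]
  set rpz := (ℙ {ω | z < Z (⟨0, hK⟩ : Fin K) ω}).toReal with hrpz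
  set rpa := (ℙ {ω | α < Z (⟨0, hK⟩ : Fin K) ω}).toReal with hrpa
  set rqa := (ℙ {ω | Z (⟨0, hK⟩ : Fin K) ω ≤ α}).toReal with hrqa
  have hindex : ∀ f : Finset (Fin K) × Fin K → ℝ,
      ∑ p ∈ P, f p = ∑ S : Finset (Fin K), ∑ i ∈ S, f (S, i) := by
    intro f
    calc ∑ p ∈ P, f p
        = ∑ p : Finset (Fin K) × Fin K, if p.2 ∈ p.1 then f p else 0 :=
          Finset.sum_filter _ _
      _ = ∑ S : Finset (Fin K), ∑ i : Fin K, if i ∈ S then f (S, i) else 0 :=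
          Fintype.sum_prod_type _
      _ = ∑ S : Finset (Fin K), ∑ i ∈ S, f (S, i) := by
          refine Finset.sum_congr rfl fun S _ => ?_
          rw [Finset.sum_ite_mem, Finset.univ_inter]
  rw [hindex (fun p => (ℙ (sfF T p)).toReal *
    (rpz * rpa ^ (p.1.card - 1) * rqa ^ (K - p.1.card)))]
  -- the probabilities of complementary events sum to one
  have hq : rpa + rqa = 1 := by
    have hcompl : {ω | Z (⟨0, hK⟩ : Fin K) ω ≤ α} = {ω | α < Z (⟨0, hK⟩ : Fin K) ω}ᶜ := by
      ext ω; simp [not_lt]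
    have hmeas' : MeasurableSet {ω | α < Z (⟨0, hK⟩ : Fin K) ω} :=
      (hZmeas _) measurableSet_Ioi
    have hsum1 : ℙ {ω | α < Z (⟨0, hK⟩ : Fin K) ω} + ℙ {ω | Z (⟨0, hK⟩ : Fin K) ω ≤ α}
        = 1 := by
      rw [hcompl, measure_add_measure_compl hmeas', measure_univ]
    calc rpa + rqa
        = ((ℙ {ω | α < Z (⟨0, hK⟩ : Fin K) ω}) + ℙ {ω | Z (⟨0, hK⟩ : Fin K) ω ≤ α}).toReal :=
          (ENNReal.toReal_add (measure_ne_top _ _) (measure_ne_top _ _)).symm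
      _ = (1 : ℝ≥0∞).toReal := by rw [hsum1]
      _ = 1 := ENNReal.toReal_one
  have hFsum : ∀ S : Finset (Fin K), S.Nonempty →
      ∑ i ∈ S, (ℙ (sfF T (S, i))).toReal = 1 := by
    intro S hS
    rw [← ENNReal.toReal_sum (fun i _ => measure_ne_top _ _),
      sf_aux_F_sum T hTmeas htie hS, ENNReal.toReal_one]
  have hrqa_eq : rqa = 1 - rpa := by linarith
  rw [show (1 : ℝ) - rpa = rqa from hrqa_eq.symm]
  exact sf_aux_final_algebra hpα hq (fun S i => (ℙ (sfF T (S, i))).toReal) hFsum
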